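/- If k is odd, b ≠ 0, d ≠ 0, and (bc - (1-e)((a-1)^2+b^2))/(bd) > 0, then F has exactly two fixed points other than the origin, namely ±p1, where p1 = (x1, ((a^2+b^2-a)/b)·x1, (((a-1)^2+b^2)/b)·x1) and x1 is the positive (k-1)-th root of (bc - (1-e)((a-1)^2+b^2))/(bd). -/

import Mathlib

/-- The ACT map. -/
def ACT (a b c d e : ℝ) (k : ℕ) : ℝ × ℝ × ℝ → ℝ × ℝ × ℝ :=
  fun p => (a * p.1 - b * (p.2.1 - p.2.2), b * p.1 + a * (p.2.1 - p.2.2),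
    c * p.1 - d * p.1 ^ k + e * p.2.2)

/-- For odd `k` and a positive parameter combination, the ACT map has exactly two
nontrivial fixed points `±p₁`. -/
theorem ACT_two_nontrivial_fixed_points_odd (a b c d e : ℝ) (k : ℕ) (hk : 1 < k)
    (hkodd : Odd k) (hb : b ≠ 0) (hd : d ≠ 0)
    (hpos : (b * c - (1 - e) * ((a - 1) ^ 2 + b ^ 2)) / (b * d) > 0) (x1 : ℝ)
    (hx1pos : 0 < x1)
    (hx1 : x1 ^ (k - 1) = (b * c - (1 - e) * ((a - 1) ^ 2 + b ^ 2)) / (b * d)) :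
    letI p1 : ℝ × ℝ × ℝ :=
      (x1, ((a ^ 2 + b ^ 2 - a) / b) * x1, (((a - 1) ^ 2 + b ^ 2) / b) * x1)
    {p : ℝ × ℝ × ℝ | ACT a b c d e k p = p ∧ p ≠ (0, 0, 0)} = {p1, -p1} ∧ p1 ≠ -p1 := by
  have hbd : b * d ≠ 0 := mul_ne_zero hb hd
  have hx1ne : x1 ≠ 0 := ne_of_gt hx1pos
  rw [eq_div_iff hbd] at hx1
  -- key : b*c - (1-e)*A = b*d*x1^(k-1)
  have key : b * c - (1 - e) * ((a - 1) ^ 2 + b ^ 2) = b * d * x1 ^ (k - 1) := by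
    linarith [hx1]
  have hk1 : k - 1 + 1 = k := Nat.sub_add_cancel hk.le
  have hxk : x1 ^ k = x1 ^ (k - 1) * x1 := by rw [← pow_succ, hk1]
  have heven : Even (k - 1) := Nat.Odd.sub_odd hkodd odd_one
  have hk1ne : k - 1 ≠ 0 := by omega
  constructor
  · ext p
    obtain ⟨x, y, z⟩ := p
    simp only [ACT, Set.mem_setOf_eq, Set.mem_insert_iff, Set.mem_singleton_iff,
      Prod.mk.injEq, Prod.neg_mk, ne_eq]
    constructor
    · rintro ⟨⟨h1, h2, h3⟩, hne⟩
      have hy : b * y = (a ^ 2 + b ^ 2 - a) * x := by linear_combination (-a) * h1 + (-b) * h2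
      have hz : b * z = ((a - 1) ^ 2 + b ^ 2) * x := by
        linear_combination (-(a - 1)) * h1 + (-b) * h2
      have hxx : b * d * x ^ k = b * d * (x1 ^ (k - 1) * x) := by
        linear_combination (-b) * h3 + (e - 1) * hz + x * key
      have hxx' : x ^ k = x1 ^ (k - 1) * x := mul_left_cancel₀ hbd hxx
      have hxne : x ≠ 0 := by
        intro h0
        apply hne
        subst h0
        have hy0 : y = 0 := by
          have : b * y = 0 := by simpa using hy
          exact (mul_eq_zero.mp this).resolve_left hb
        have hz0 : z = 0 := by
          have : b * z = 0 := by simpa using hz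
          exact (mul_eq_zero.mp this).resolve_left hb
        simp [hy0, hz0]
      have hpow : x ^ (k - 1) = x1 ^ (k - 1) := by
        have : x ^ (k - 1) * x = x1 ^ (k - 1) * x := by
          rw [← pow_succ, hk1]; exact hxx'
        exact mul_right_cancel₀ hxne this
      have habs : |x| = x1 := by
        have h1' : |x| ^ (k - 1) = |x1| ^ (k - 1) := by
          rw [← abs_pow, ← abs_pow, hpow]
        have := (pow_left_strictMonoOn₀ hk1ne).injOn (abs_nonneg x) (abs_nonneg x1) h1'
        rw [this, abs_of_pos hx1pos]
      rcases (abs_eq hx1pos.le).mp habs with hx | hx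
      · left
        subst hx
        refine ⟨rfl, ?_, ?_⟩
        · field_simp; linarith [hy]
        · field_simp; linarith [hz]
      · right
        subst hx
        refine ⟨rfl, ?_, ?_⟩
        · field_simp at hy ⊢; linarith [hy]
        · field_simp at hz ⊢; linarith [hz]
    · have hneg : (-x1) ^ k = -(x1 ^ k) := Odd.neg_pow hkodd x1
      rintro (⟨hx, hy, hz⟩ | ⟨hx, hy, hz⟩) <;> subst hx <;> subst hy <;> subst hz <;>
        refine ⟨⟨by field_simp; ring, by field_simp; ring, ?_⟩, fun hc => hx1ne (by simpa using hc.1)⟩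
      · field_simp
        linear_combination x * key - b * d * hxk
      · field_simp [hneg]
        linear_combination (-x1) * key + b * d * hxk - x1 ^ k * d * b * (Odd.neg_one_pow (α := ℝ) hkodd)
  · intro h
    rw [Prod.mk.injEq] at h
    have := h.1
    simp only [Prod.neg_mk] at h
    linarith [h.1, hx1pos]
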